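/- The meet operator ⊓ on the symbolic lattice L yields the greatest lower bound: for all l₁, l₂, w ∈ L, if w ⊑ l₁ and w ⊑ l₂, then w ⊑ l₁ ⊓ l₂. -/
import Mathlib


inductive SymExpr (P U B F : Type*) where
  | bot : SymExpr P U B F
  | top : SymExpr P U B F
  | prim : P → SymExpr P U B F
  | unop : U → SymExpr P U B F → SymExpr P U B F
  | binop : B → SymExpr P U B F → SymExpr P U B F → SymExpr P U B F
  | fn : F → List (SymExpr P U B F) → SymExpr P U B F
  | phi : List (SymExpr P U B F) → SymExpr P U B F

namespace SymExpr

variable {P U B F : Type*}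

/-- The partial order `⊑` on the symbolic lattice. -/
inductive Le : SymExpr P U B F → SymExpr P U B F → Prop where
  | bot (l) : Le .bot l
  | top (l) : Le l .top
  | prim (p : P) : Le (.prim p) (.prim p)
  | unop {l l'} (u : U) : Le l l' → Le (.unop u l) (.unop u l')
  | binop {l₁ l₂ l₁' l₂'} (b : B) : Le l₁ l₁' → Le l₂ l₂' →
      Le (.binop b l₁ l₂) (.binop b l₁' l₂')
  | fn {ls ls'} (f : F) : List.Forall₂ Le ls ls' → Le (.fn f ls) (.fn f ls')
  | phi {ls ls'} : List.Forall₂ Le ls ls' → Le (.phi ls) (.phi ls')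

attribute [local instance] Classical.propDecidable

mutual
noncomputable def join : SymExpr P U B F → SymExpr P U B F → SymExpr P U B F
  | .bot, l => l
  | l, .bot => l
  | .prim p, .prim p' => if p = p' then .prim p else .top
  | .unop u l, .unop u' l' => if u = u' then .unop u (join l l') else .top
  | .binop b l₁ l₂, .binop b' l₁' l₂' =>
      if b = b' then .binop b (join l₁ l₁') (join l₂ l₂') else .top
  | .fn f ls, .fn f' ls' =>
      if f = f' ∧ ls.length = ls'.length then .fn f (joinList ls ls') else .top
  | .phi ls, .phi ls' =>
      if ls.length = ls'.length then .phi (joinList ls ls') else .top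
  | _, _ => .top

noncomputable def joinList : List (SymExpr P U B F) → List (SymExpr P U B F) → List (SymExpr P U B F)
  | l :: ls, l' :: ls' => join l l' :: joinList ls ls'
  | _, _ => []
end

mutual
noncomputable def meet : SymExpr P U B F → SymExpr P U B F → SymExpr P U B F
  | .top, l => l
  | l, .top => l
  | .prim p, .prim p' => if p = p' then .prim p else .bot
  | .unop u l, .unop u' l' => if u = u' then .unop u (meet l l') else .bot
  | .binop b l₁ l₂, .binop b' l₁' l₂' =>
      if b = b' then .binop b (meet l₁ l₁') (meet l₂ l₂') else .bot
  | .fn f ls, .fn f' ls' =>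
      if f = f' ∧ ls.length = ls'.length then .fn f (meetList ls ls') else .bot
  | .phi ls, .phi ls' =>
      if ls.length = ls'.length then .phi (meetList ls ls') else .bot
  | _, _ => .bot

noncomputable def meetList : List (SymExpr P U B F) → List (SymExpr P U B F) → List (SymExpr P U B F)
  | l :: ls, l' :: ls' => meet l l' :: meetList ls ls'
  | _, _ => []
end

mutual
def depth : SymExpr P U B F → ℕ
  | .bot => 0
  | .top => 0
  | .prim _ => 0
  | .unop _ l => 1 + depth l
  | .binop _ l₁ l₂ => 1 + max (depth l₁) (depth l₂)
  | .fn _ ls => 1 + depthList ls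
  | .phi ls => 1 + depthList ls

def depthList : List (SymExpr P U B F) → ℕ
  | [] => 0
  | l :: ls => max (depth l) (depthList ls)
end

/-- The widening truncation `T_i`. -/
def trunc : ℕ → SymExpr P U B F → SymExpr P U B F
  | _, .bot => .bot
  | _, .top => .top
  | _, .prim p => .prim p
  | 0, .unop _ _ => .top
  | 0, .binop _ _ _ => .top
  | 0, .fn _ _ => .top
  | 0, .phi _ => .top
  | i + 1, .unop u l => .unop u (trunc i l)
  | i + 1, .binop b l₁ l₂ => .binop b (trunc i l₁) (trunc i l₂)
  | i + 1, .fn f ls => .fn f (ls.map (fun l => trunc i l))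
  | i + 1, .phi ls => .phi (ls.map (fun l => trunc i l))

end SymExpr

namespace SymExpr

variable {P U B F : Type*}

mutual
theorem le_meet_aux (w l₁ l₂ : SymExpr P U B F)
    (h₁ : w.Le l₁) (h₂ : w.Le l₂) : w.Le (l₁.meet l₂) := by
  cases h₁ with
  | bot => exact .bot _
  | top => simpa [meet] using h₂
  | prim p =>
    cases h₂ with
    | top => simpa [meet] using Le.prim p
    | prim => simpa [meet] using Le.prim p
  | @unop l l' u h =>
    cases h₂ with
    | top => simpa [meet] using Le.unop u h
    | unop _ h' => simpa [meet] using Le.unop u (le_meet_aux _ _ _ h h')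
  | @binop a₁ a₂ b₁ b₂ b h h' =>
    cases h₂ with
    | top => simpa [meet] using Le.binop b h h'
    | binop _ g g' =>
      simpa [meet] using Le.binop b (le_meet_aux _ _ _ h g) (le_meet_aux _ _ _ h' g')
  | @fn ws ls f hf =>
    cases h₂ with
    | top => simpa [meet] using Le.fn f hf
    | @fn _ ls' _ hf' =>
      have hlen : ls.length = ls'.length := by
        rw [← hf.length_eq, ← hf'.length_eq]
      simpa [meet, hlen] using Le.fn f (le_meetList_aux ws ls ls' hf hf')
  | @phi ws ls hf =>
    cases h₂ with
    | top => simpa [meet] using Le.phi hf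
    | @phi _ ls' hf' =>
      have hlen : ls.length = ls'.length := by
        rw [← hf.length_eq, ← hf'.length_eq]
      simpa [meet, hlen] using Le.phi (le_meetList_aux ws ls ls' hf hf')
termination_by sizeOf w
decreasing_by all_goals (subst_vars; simp_wf) <;> omega

theorem le_meetList_aux (ws ls ls' : List (SymExpr P U B F))
    (h₁ : List.Forall₂ Le ws ls) (h₂ : List.Forall₂ Le ws ls') :
    List.Forall₂ Le ws (meetList ls ls') := by
  cases h₁ with
  | nil => cases h₂; simp [meetList]
  | @cons _ b _ bs h t =>
    cases h₂ with
    | cons h' t' =>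
      simpa [meetList] using
        List.Forall₂.cons (le_meet_aux _ _ _ h h') (le_meetList_aux _ _ _ t t')
termination_by sizeOf ws
decreasing_by all_goals (subst_vars; simp_wf) <;> omega
end

end SymExpr

/-- the meet is the greatest lower bound. -/
theorem SymExpr.le_meet {P U B F : Type*} (l₁ l₂ w : SymExpr P U B F)
    (h₁ : w.Le l₁) (h₂ : w.Le l₂) : w.Le (l₁.meet l₂) := by
  exact le_meet_aux w l₁ l₂ h₁ h₂
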